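/- Let (X,d) be a metric space, m a Borel measure on X, n ≥ 1 an integer, and γ: [0,1] → X a map. Assume that for every δ ∈ (0,1/20) there exist ε > 0, r̄ > 0, C > 0 and α > 0 such that 0 < m(B_r(γ_s)) < ∞ and |m(B_r(γ_s))/m(B_r(γ_{s'})) − 1| ≤ C·|s−s'|^α for every r ∈ (0,r̄) and all s, s' ∈ [δ, 1−δ] with |s−s'| < ε. If the set { t ∈ (0,1) : the n-dimensional density Θ_n(m,γ_t) exists and lies in (0,∞) } is dense in (0,1), then for every t ∈ (0,1) the density Θ_n(m,γ_t) exists and lies in (0,∞). -/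

import Mathlib

open MeasureTheory Filter Set Metric Topology
open scoped ENNReal NNReal

noncomputable section

/-- `ω_k = π^{k/2} / Γ(1 + k/2)`, the volume of the unit ball of `ℝ^k` for integer `k`. -/
def omegaN (k : ℕ) : ℝ := Real.pi ^ ((k : ℝ) / 2) / Real.Gamma ((k : ℝ) / 2 + 1)

/-- The quotient `m(B_r(x)) / (ω_n rⁿ)` whose limit as `r → 0⁺` (when it exists) is the
`n`-dimensional density of `m` at `x`. -/
def densityRatio {X : Type*} [PseudoMetricSpace X] [MeasurableSpace X]
    (m : Measure X) (n : ℕ) (x : X) (r : ℝ) : ℝ≥0∞ :=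
  m (Metric.ball x r) / ENNReal.ofReal (omegaN n * r ^ n)

/-- The `n`-dimensional density `Θ_n(m,x)` exists and equals `θ`. -/
def HasDensity {X : Type*} [PseudoMetricSpace X] [MeasurableSpace X]
    (m : Measure X) (n : ℕ) (x : X) (θ : ℝ≥0∞) : Prop :=
  Tendsto (fun r : ℝ => densityRatio m n x r) (𝓝[>] (0 : ℝ)) (𝓝 θ)

/-- The `n`-dimensional density of `m` at `x` exists and lies in `(0,∞)`. -/
def HasPosFiniteDensity {X : Type*} [PseudoMetricSpace X] [MeasurableSpace X]
    (m : Measure X) (n : ℕ) (x : X) : Prop :=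
  ∃ θ : ℝ≥0∞, 0 < θ ∧ θ < ⊤ ∧ HasDensity m n x θ

/-- Auxiliary: from a real ratio bound to ENNReal inequalities. -/
lemma aux_ennreal_bounds (a b : ℝ≥0∞) (c : ℝ) (ha : a ≠ ⊤) (hb0 : b ≠ 0) (hb : b ≠ ⊤)
    (h : |a.toReal / b.toReal - 1| ≤ c) :
    a ≤ ENNReal.ofReal (1 + c) * b ∧ ENNReal.ofReal (1 - c) * b ≤ a := by
  have hbR : 0 < b.toReal := ENNReal.toReal_pos hb0 hb
  rw [abs_le] at h
  have hc : 0 ≤ c := by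
    nlinarith [ENNReal.toReal_nonneg (a := a), h.1, h.2, hbR,
      div_nonneg (ENNReal.toReal_nonneg (a := a)) hbR.le]
  have h1 : a.toReal ≤ (1 + c) * b.toReal := by
    have := (div_le_iff₀ hbR).mp (by linarith [h.2] : a.toReal / b.toReal ≤ 1 + c)
    linarith
  have h2 : (1 - c) * b.toReal ≤ a.toReal := by
    have := (le_div_iff₀ hbR).mp (by linarith [h.1] : 1 - c ≤ a.toReal / b.toReal)
    linarith
  constructor
  · rw [show ENNReal.ofReal (1 + c) * b = ENNReal.ofReal ((1 + c) * b.toReal) by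
      rw [ENNReal.ofReal_mul (by linarith), ENNReal.ofReal_toReal hb]]
    exact (ENNReal.le_ofReal_iff_toReal_le ha (by positivity)).mpr h1
  · rcases le_or_gt (1 - c) 0 with h0 | h0
    · simp [ENNReal.ofReal_of_nonpos h0]
    · calc ENNReal.ofReal (1 - c) * b = ENNReal.ofReal ((1 - c) * b.toReal) := by
            rw [ENNReal.ofReal_mul h0.le, ENNReal.ofReal_toReal hb]
        _ ≤ ENNReal.ofReal a.toReal := ENNReal.ofReal_le_ofReal h2
        _ = a := ENNReal.ofReal_toReal ha

/-- Auxiliary arithmetic lemma. -/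
lemma aux_arith (Lr lr θr c η : ℝ) (hc0 : 0 ≤ c) (_hθr0 : 0 < θr) (_hlr0 : 0 < lr)
    (h1 : Lr ≤ (1 + c) * θr) (h2 : (1 - c) * θr ≤ lr) (hθ2 : θr ≤ 2 * lr)
    (hc4 : c * (4 * (lr + 1)) ≤ η) : Lr ≤ lr + η := by
  nlinarith [mul_le_mul_of_nonneg_left hθ2 hc0]

theorem statement5
    {X : Type*} [MetricSpace X] [MeasurableSpace X]
    (m : Measure X) (n : ℕ) (hn : 1 ≤ n) (γ : ℝ → X)
    (hHolder : ∀ δ : ℝ, 0 < δ → δ < 1 / 20 →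
      ∃ (ε : ℝ) (rbar : ℝ) (C : ℝ) (α : ℝ), 0 < ε ∧ 0 < rbar ∧ 0 < C ∧ 0 < α ∧
        ∀ r : ℝ, 0 < r → r < rbar →
          (∀ s ∈ Set.Icc δ (1 - δ),
            0 < m (Metric.ball (γ s) r) ∧ m (Metric.ball (γ s) r) < ⊤) ∧
          (∀ s ∈ Set.Icc δ (1 - δ), ∀ s' ∈ Set.Icc δ (1 - δ), |s - s'| < ε →
            |(m (Metric.ball (γ s) r)).toReal / (m (Metric.ball (γ s') r)).toReal - 1| ≤
              C * |s - s'| ^ α))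
    (hdense : ∀ t ∈ Set.Ioo (0 : ℝ) 1,
      t ∈ closure {t' : ℝ | t' ∈ Set.Ioo (0 : ℝ) 1 ∧ HasPosFiniteDensity m n (γ t')}) :
    ∀ t ∈ Set.Ioo (0 : ℝ) 1, HasPosFiniteDensity m n (γ t) := by
  intro t ht
  obtain ⟨ht0, ht1⟩ := ht
  set δ : ℝ := min (min t (1 - t)) (1 / 10) / 3 with hδdef
  have hδ0 : 0 < δ := by
    apply div_pos _ (by norm_num)
    exact lt_min (lt_min ht0 (by linarith)) (by norm_num)
  have hδ20 : δ < 1 / 20 := by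
    have : min (min t (1 - t)) (1 / 10) ≤ 1 / 10 := min_le_right _ _
    rw [hδdef]; linarith
  have hδt : 3 * δ ≤ t := by
    have : min (min t (1 - t)) (1 / 10) ≤ t := (min_le_left _ _).trans (min_le_left _ _)
    rw [hδdef]; linarith
  have hδt' : 3 * δ ≤ 1 - t := by
    have : min (min t (1 - t)) (1 / 10) ≤ 1 - t := (min_le_left _ _).trans (min_le_right _ _)
    rw [hδdef]; linarith
  obtain ⟨ε, rbar, C, α, hε, hrbar, hC, hα, H⟩ := hHolder δ hδ0 hδ20
  have htmem : t ∈ Set.Icc δ (1 - δ) := ⟨by linarith, by linarith⟩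
  set L := Filter.limsup (fun r : ℝ => densityRatio m n (γ t) r) (𝓝[>] (0 : ℝ)) with hL
  set l := Filter.liminf (fun r : ℝ => densityRatio m n (γ t) r) (𝓝[>] (0 : ℝ)) with hl
  -- Claim A
  have claimA : ∀ d0 : ℝ, 0 < d0 → ∃ θ' : ℝ≥0∞, 0 < θ' ∧ θ' < ⊤ ∧ ∃ c : ℝ, 0 ≤ c ∧
      c ≤ C * d0 ^ α ∧ L ≤ ENNReal.ofReal (1 + c) * θ' ∧ ENNReal.ofReal (1 - c) * θ' ≤ l := by
    intro d0 hd0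
    have hη : (0 : ℝ) < min (min δ ε) d0 := lt_min (lt_min hδ0 hε) hd0
    obtain ⟨t', ⟨ht'Ioo, θ', hθ0, hθtop, hθtendsto⟩, hdist⟩ :=
      Metric.mem_closure_iff.mp (hdense t ⟨ht0, ht1⟩) _ hη
    rw [Real.dist_eq] at hdist
    have hdδ : |t - t'| < δ := hdist.trans_le ((min_le_left _ _).trans (min_le_left _ _))
    have hdε : |t - t'| < ε := hdist.trans_le ((min_le_left _ _).trans (min_le_right _ _))
    have hdd0 : |t - t'| < d0 := hdist.trans_le (min_le_right _ _)
    have habs := abs_lt.mp hdδ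
    have ht'mem : t' ∈ Set.Icc δ (1 - δ) := ⟨by linarith, by linarith⟩
    set c : ℝ := C * |t - t'| ^ α with hc
    have hc0 : 0 ≤ c := by positivity
    have hcle : c ≤ C * d0 ^ α := by
      apply mul_le_mul_of_nonneg_left _ hC.le
      exact Real.rpow_le_rpow (abs_nonneg _) hdd0.le hα.le
    refine ⟨θ', hθ0, hθtop, c, hc0, hcle, ?_, ?_⟩
    · -- L ≤ ofReal(1+c) * θ'
      have hev : (fun r : ℝ => densityRatio m n (γ t) r) ≤ᶠ[𝓝[>] (0 : ℝ)]
          (fun r => ENNReal.ofReal (1 + c) * densityRatio m n (γ t') r) := by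
        filter_upwards [Ioo_mem_nhdsGT_of_mem ⟨le_refl (0:ℝ), hrbar⟩] with r hr
        obtain ⟨hpos, hhold⟩ := H r hr.1 hr.2
        have hb := hpos t' ht'mem
        have ha := (hpos t htmem).2
        have key := (aux_ennreal_bounds _ _ c ha.ne hb.1.ne' hb.2.ne
          (hhold t htmem t' ht'mem hdε)).1
        calc densityRatio m n (γ t) r
            ≤ (ENNReal.ofReal (1 + c) * m (Metric.ball (γ t') r)) /
              ENNReal.ofReal (omegaN n * r ^ n) :=
              ENNReal.div_le_div_right key _
          _ = ENNReal.ofReal (1 + c) * densityRatio m n (γ t') r := by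
              rw [densityRatio, mul_div_assoc]
      calc L ≤ Filter.limsup (fun r : ℝ => ENNReal.ofReal (1 + c) * densityRatio m n (γ t') r)
            (𝓝[>] (0 : ℝ)) := Filter.limsup_le_limsup hev
        _ = ENNReal.ofReal (1 + c) * θ' :=
            (ENNReal.Tendsto.const_mul hθtendsto (Or.inr ENNReal.ofReal_ne_top)).limsup_eq
    · -- ofReal(1-c) * θ' ≤ l
      have hev : (fun r : ℝ => ENNReal.ofReal (1 - c) * densityRatio m n (γ t') r) ≤ᶠ[𝓝[>] (0 : ℝ)]
          (fun r => densityRatio m n (γ t) r) := by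
        filter_upwards [Ioo_mem_nhdsGT_of_mem ⟨le_refl (0:ℝ), hrbar⟩] with r hr
        obtain ⟨hpos, hhold⟩ := H r hr.1 hr.2
        have hb := hpos t' ht'mem
        have ha := (hpos t htmem).2
        have key := (aux_ennreal_bounds _ _ c ha.ne hb.1.ne' hb.2.ne
          (hhold t htmem t' ht'mem hdε)).2
        calc ENNReal.ofReal (1 - c) * densityRatio m n (γ t') r
            = (ENNReal.ofReal (1 - c) * m (Metric.ball (γ t') r)) /
              ENNReal.ofReal (omegaN n * r ^ n) := by rw [densityRatio, mul_div_assoc]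
          _ ≤ densityRatio m n (γ t) r := ENNReal.div_le_div_right key _
      calc ENNReal.ofReal (1 - c) * θ' =
          Filter.liminf (fun r : ℝ => ENNReal.ofReal (1 - c) * densityRatio m n (γ t') r)
            (𝓝[>] (0 : ℝ)) :=
            ((ENNReal.Tendsto.const_mul hθtendsto (Or.inr ENNReal.ofReal_ne_top)).liminf_eq).symm
        _ ≤ l := Filter.liminf_le_liminf hev
  -- get finiteness and positivity from one instance of claim A
  obtain ⟨d1, hd10, hd1⟩ : ∃ d1 : ℝ, 0 < d1 ∧ C * d1 ^ α ≤ 1 / 2 := by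
    refine ⟨(1 / (2 * C)) ^ α⁻¹, Real.rpow_pos_of_pos (by positivity) _, ?_⟩
    rw [Real.rpow_inv_rpow (by positivity) hα.ne']
    rw [mul_one_div]
    rw [div_le_div_iff₀ (by positivity) (by norm_num)]
    linarith
  obtain ⟨θ₁, hθ₁0, hθ₁top, c₁, hc₁0, hc₁le, hLle, hlge⟩ := claimA d1 hd10
  have hc₁half : c₁ ≤ 1 / 2 := hc₁le.trans hd1
  have hLtop : L ≠ ⊤ := by
    refine ne_top_of_le_ne_top ?_ hLle
    exact ENNReal.mul_ne_top ENNReal.ofReal_ne_top hθ₁top.ne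
  have hl0 : l ≠ 0 := by
    intro h0
    rw [h0] at hlge
    have : ENNReal.ofReal (1 - c₁) * θ₁ ≠ 0 := by
      apply mul_ne_zero _ hθ₁0.ne'
      simp only [ne_eq, ENNReal.ofReal_eq_zero, not_le]
      linarith
    exact this (le_antisymm hlge zero_le)
  have hlL : l ≤ L := Filter.liminf_le_limsup
  have hltop : l ≠ ⊤ := ne_top_of_le_ne_top hLtop hlL
  set Lr := L.toReal with hLr
  set lr := l.toReal with hlr
  have hlr0 : 0 < lr := ENNReal.toReal_pos hl0 hltop
  have hlrLr : lr ≤ Lr := ENNReal.toReal_le_toReal hltop hLtop |>.mpr hlL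
  -- Claim B : Lr ≤ lr
  have claimB : Lr ≤ lr := by
    by_contra hcon
    push_neg at hcon
    set η : ℝ := (Lr - lr) / 2 with hηdef
    have hη0 : 0 < η := by rw [hηdef]; linarith
    set η' : ℝ := min (1 / 2) (η / (4 * (lr + 1))) with hη'def
    have hη'0 : 0 < η' := lt_min (by norm_num) (by positivity)
    obtain ⟨d0, hd00, hd0le⟩ : ∃ d0 : ℝ, 0 < d0 ∧ C * d0 ^ α ≤ η' := by
      refine ⟨(η' / C) ^ α⁻¹, Real.rpow_pos_of_pos (by positivity) _, ?_⟩
      rw [Real.rpow_inv_rpow (by positivity) hα.ne', mul_div_cancel₀ _ hC.ne']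
    obtain ⟨θ', hθ'0, hθ'top, c, hc0, hcle, hL2, hl2⟩ := claimA d0 hd00
    have hchalf : c ≤ 1 / 2 := (hcle.trans hd0le).trans (min_le_left _ _)
    have hcη : c ≤ η / (4 * (lr + 1)) := (hcle.trans hd0le).trans (min_le_right _ _)
    set θr := θ'.toReal with hθr
    have hθr0 : 0 < θr := ENNReal.toReal_pos hθ'0.ne' hθ'top.ne
    have h1 : Lr ≤ (1 + c) * θr := by
      have := ENNReal.toReal_le_toReal hLtop
        (ENNReal.mul_ne_top ENNReal.ofReal_ne_top hθ'top.ne) |>.mpr hL2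
      rwa [ENNReal.toReal_mul, ENNReal.toReal_ofReal (by linarith)] at this
    have h2 : (1 - c) * θr ≤ lr := by
      have := ENNReal.toReal_le_toReal
        (ENNReal.mul_ne_top ENNReal.ofReal_ne_top hθ'top.ne) hltop |>.mpr hl2
      rwa [ENNReal.toReal_mul, ENNReal.toReal_ofReal (by linarith)] at this
    -- θr ≤ 2 * lr, Lr ≤ lr + 2 c θr ≤ lr + 4 c lr ≤ lr + η
    have hθ2lr : θr ≤ 2 * lr := by nlinarith
    have hc4 : c * (4 * (lr + 1)) ≤ η := (le_div_iff₀ (by positivity)).mp hcη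
    have : Lr ≤ lr + η := aux_arith Lr lr θr c η hc0 hθr0 hlr0 h1 h2 hθ2lr hc4
    rw [hηdef] at this
    linarith
  have hLeq : L = l := (ENNReal.toReal_eq_toReal_iff' hLtop hltop).mp (le_antisymm hlrLr claimB).symm
  refine ⟨L, ?_, ?_, ?_⟩
  · rw [hLeq]; exact pos_iff_ne_zero.mpr hl0
  · exact lt_top_iff_ne_top.mpr hLtop
  · exact tendsto_of_liminf_eq_limsup (hLeq ▸ rfl) rfl

end
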